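/- Proposition 3.1 (quasi-Prüfer case): A ring extension R ⊆ S is quasi-Prüfer if and only if, for every prime ideal P of R, the extension R_P ⊆ S_P is quasi-Prüfer, where S_P denotes the localization of S at the multiplicative set R ∖ P. -/

import Mathlib

/-- A ring extension `R ⊆ S` (given by an injective algebra map) is *Prüfer* if every
intermediate ring `T ∈ [R,S]` is integrally closed in `S`, i.e. `R ⊆ S` is a normal pair. -/
def IsPruferExtension (R S : Type*) [CommRing R] [CommRing S] [Algebra R S] : Prop :=
  ∀ T : Subalgebra R S, ∀ x : S, IsIntegral T x → x ∈ T

/-- A ring extension `R ⊆ S` is *quasi-Prüfer* if the integral closure `\overline{R}` of `R`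
in `S` is such that `\overline{R} ⊆ S` is Prüfer, i.e. every intermediate ring of
`[\overline{R}, S]` is integrally closed in `S`. -/
def IsQuasiPruferExtension (R S : Type*) [CommRing R] [CommRing S] [Algebra R S] : Prop :=
  ∀ T : Subalgebra R S, integralClosure R S ≤ T → ∀ x : S, IsIntegral T x → x ∈ T

open Polynomial in
theorem descend_integral_aux {A S S' : Type*} [CommRing A] [CommRing S] [CommRing S']
    [Algebra A S] [Algebra A S'] [Algebra S S'] [IsScalarTower A S S']
    (N : Submonoid S) [IsLocalization N S']
    (hN : ∀ n : N, ∃ a : A, algebraMap A S a = (n : S))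
    {s : S} (hs : IsIntegral A ((algebraMap S S') s)) :
    ∃ n : N, IsIntegral A ((n : S) * s) := by
  rcases subsingleton_or_nontrivial A with hA | hA
  · haveI := Module.subsingleton A S
    exact ⟨1, X, monic_X, Subsingleton.elim _ _⟩
  obtain ⟨p, hp, hps⟩ := hs
  set q : A[X] := p * X with hq
  have hqmonic : q.Monic := hp.mul monic_X
  set z : S := eval₂ (algebraMap A S) s q with hz
  have hz0 : algebraMap S S' z = 0 := by
    have h1 := hom_eval₂ q (algebraMap A S) (algebraMap S S') s
    rw [← hz] at h1
    rw [h1, ← IsScalarTower.algebraMap_eq, hq, eval₂_mul, eval₂_X, hps, zero_mul]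
  obtain ⟨n, hn⟩ := (IsLocalization.map_eq_zero_iff N S' z).mp hz0
  obtain ⟨a, ha⟩ := hN n
  have hdeg : q.natDegree = p.natDegree + 1 := by
    rw [hq, natDegree_mul_X hp.ne_zero]
  refine ⟨n, q.scaleRoots a, (monic_scaleRoots_iff a).mpr hqmonic, ?_⟩
  rw [← ha, scaleRoots_eval₂_mul, ← hz, hdeg, pow_succ, mul_assoc, ha, hn, mul_zero]

theorem fwd_aux {R S Rm Sm : Type*} [CommRing R] [CommRing S] [CommRing Rm] [CommRing Sm]
    [Algebra R S] (M : Submonoid R)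
    [Algebra R Rm] [IsLocalization M Rm]
    [Algebra S Sm] [Algebra R Sm] [Algebra Rm Sm]
    [IsScalarTower R S Sm] [IsScalarTower R Rm Sm]
    [IsLocalization (M.map (algebraMap R S)) Sm]
    (H : IsQuasiPruferExtension R S) : IsQuasiPruferExtension Rm Sm := by
  intro T' hT' x hx
  have hcomp : ∀ r : R, algebraMap Rm Sm (algebraMap R Rm r)
      = algebraMap S Sm (algebraMap R S r) := fun r => by
    rw [← IsScalarTower.algebraMap_apply, IsScalarTower.algebraMap_apply R S Sm]
  -- units helper
  have hunit : ∀ r : M, ∃ v, v ∈ T' ∧ algebraMap S Sm (algebraMap R S r) * v = 1 := by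
    intro r
    have hu : IsUnit (algebraMap R Rm (r : R)) := IsLocalization.map_units Rm r
    refine ⟨algebraMap Rm Sm ((hu.unit⁻¹ : Units Rm) : Rm), T'.algebraMap_mem _, ?_⟩
    rw [← hcomp, ← map_mul, hu.mul_val_inv, map_one]
  -- the pullback subalgebra
  set T : Subalgebra R S := (T'.restrictScalars R).comap (IsScalarTower.toAlgHom R S Sm) with hTdef
  have hmemT : ∀ s : S, s ∈ T ↔ algebraMap S Sm s ∈ T' := fun s => Iff.rfl
  have hTint : integralClosure R S ≤ T := by
    intro s hs
    have h1 : IsIntegral R (algebraMap S Sm s) := hs.map (IsScalarTower.toAlgHom R S Sm)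
    exact hT' h1.tower_top
  -- the algebra T → T'
  have hmem' : ∀ t : T, algebraMap S Sm (t : S) ∈ T' := fun t => (hmemT t).mp t.2
  let ψ : T →+* T' :=
    ((algebraMap S Sm).comp (Subalgebra.val T : T →ₐ[R] S).toRingHom).codRestrict
      T'.toSubring hmem'
  letI : Algebra T T' := ψ.toAlgebra
  haveI : IsScalarTower T T' Sm := IsScalarTower.of_algebraMap_eq fun t => rfl
  -- N'' : the image submonoid in T
  set M'' : Submonoid T := M.map (algebraMap R T) with hM''
  have hM''val : ∀ m : M'', ∃ r : M, ((m : T) : S) = algebraMap R S (r : R) := by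
    rintro ⟨m, hm⟩
    obtain ⟨r, hr, rfl⟩ := hm
    exact ⟨⟨r, hr⟩, rfl⟩
  haveI hlocT' : IsLocalization M'' T' := by
    constructor
    constructor
    · rintro ⟨y, hy⟩
      obtain ⟨r, hr, hry⟩ := hy
      obtain ⟨v, hv, hveq⟩ := hunit ⟨r, hr⟩
      refine isUnit_iff_exists_inv.mpr ⟨⟨v, hv⟩, Subtype.ext ?_⟩
      have : ((algebraMap T T' y : T') : Sm) = algebraMap S Sm ((y : T) : S) := rfl
      push_cast
      rw [this, ← hry]
      have : ((algebraMap R T r : T) : S) = algebraMap R S r := rfl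
      rw [this]
      exact hveq
    · intro z
      obtain ⟨⟨s, n⟩, hsn⟩ := IsLocalization.surj (M.map (algebraMap R S)) (z : Sm)
      obtain ⟨r, hrM, hfr⟩ := n.2
      have hgn : algebraMap S Sm (n : S) ∈ T' := by
        rw [← hfr, ← hcomp]; exact T'.algebraMap_mem _
      have hgs : algebraMap S Sm s ∈ T' := by
        rw [← hsn]; exact mul_mem z.2 hgn
      refine ⟨⟨⟨s, (hmemT s).mpr hgs⟩, ⟨algebraMap R T r, ⟨r, hrM, rfl⟩⟩⟩, Subtype.ext ?_⟩
      have h1 : ((algebraMap T T' (algebraMap R T r) : T') : Sm)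
          = algebraMap S Sm (algebraMap R S r) := rfl
      push_cast
      rw [h1, hfr]
      exact hsn
    · intro t1 t2 he
      have he' : algebraMap S Sm (t1 : S) = algebraMap S Sm (t2 : S) :=
        congrArg Subtype.val he
      obtain ⟨c, hc⟩ := (IsLocalization.eq_iff_exists (M.map (algebraMap R S)) Sm).mp he'
      obtain ⟨r, hrM, hfr⟩ := c.2
      refine ⟨⟨algebraMap R T r, ⟨r, hrM, rfl⟩⟩, Subtype.ext ?_⟩
      push_cast
      rw [← hfr] at hc
      exact hc
  -- clear denominators of x
  obtain ⟨m, hm⟩ := hx.exists_multiple_integral_of_isLocalization (M := M'')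
  obtain ⟨r₂, hmr₂⟩ := hM''val m
  rw [Submonoid.smul_def, Algebra.smul_def] at hm
  obtain ⟨⟨s₀, n₀⟩, hsn₀⟩ := IsLocalization.surj (M.map (algebraMap R S)) x
  obtain ⟨r₀, hr₀M, hfr₀⟩ := n₀.2
  have hn₀T : ((n₀ : S)) ∈ T := by
    rw [← hfr₀]; exact T.algebraMap_mem r₀
  -- g (m * s₀) is integral over T
  have h3 : IsIntegral T (algebraMap S Sm (((m : T) : S) * s₀)) := by
    have h4 : IsIntegral T (algebraMap T Sm (⟨(n₀ : S), hn₀T⟩ : T)) := isIntegral_algebraMap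
    have h5 := hm.mul h4
    have : algebraMap S Sm (((m : T) : S) * s₀)
        = algebraMap T Sm (m : T) * x * algebraMap T Sm (⟨(n₀ : S), hn₀T⟩ : T) := by
      have e1 : algebraMap T Sm (m : T) = algebraMap S Sm ((m : T) : S) := rfl
      have e2 : algebraMap T Sm (⟨(n₀ : S), hn₀T⟩ : T) = algebraMap S Sm (n₀ : S) := rfl
      rw [e1, e2, map_mul, mul_assoc, hsn₀]
    rwa [this]
  -- descend integrality to S
  have hNha : ∀ n : (M.map (algebraMap R S)), ∃ a : T, algebraMap T S a = (n : S) := by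
    rintro ⟨n, hn⟩
    obtain ⟨r, hr, hrn⟩ := hn
    exact ⟨⟨n, by rw [← hrn]; exact T.algebraMap_mem r⟩, rfl⟩
  haveI : IsScalarTower T S Sm := IsScalarTower.of_algebraMap_eq fun t => rfl
  obtain ⟨n₁, h6⟩ := descend_integral_aux (A := T) (M.map (algebraMap R S)) hNha h3
  obtain ⟨r₁, hr₁M, hfr₁⟩ := n₁.2
  -- apply the global quasi-Prüfer property
  have h7 : (n₁ : S) * (((m : T) : S) * s₀) ∈ T := H T hTint _ h6
  have h8 : algebraMap S Sm ((n₁ : S) * (((m : T) : S) * s₀)) ∈ T' := (hmemT _).mp h7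
  -- now recover x
  obtain ⟨v₀, hv₀, hv₀e⟩ := hunit ⟨r₀, hr₀M⟩
  obtain ⟨v₁, hv₁, hv₁e⟩ := hunit ⟨r₁, hr₁M⟩
  obtain ⟨v₂, hv₂, hv₂e⟩ := hunit r₂
  rw [hfr₀] at hv₀e
  rw [hfr₁] at hv₁e
  have hmr₂' : algebraMap S Sm ((m : T) : S) * v₂ = 1 := by rw [hmr₂]; exact hv₂e
  have key : x = algebraMap S Sm ((n₁ : S) * (((m : T) : S) * s₀)) * v₁ * v₂ * v₀ := by
    have e3 : x = algebraMap S Sm s₀ * v₀ := by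
      calc x = x * (algebraMap S Sm (n₀ : S) * v₀) := by rw [hv₀e]; ring
      _ = algebraMap S Sm s₀ * v₀ := by rw [← mul_assoc, hsn₀]
    calc x = algebraMap S Sm s₀ * v₀ := e3
    _ = (algebraMap S Sm (n₁ : S) * v₁) * (algebraMap S Sm ((m : T) : S) * v₂)
          * (algebraMap S Sm s₀ * v₀) := by rw [hv₁e, hmr₂']; ring
    _ = algebraMap S Sm ((n₁ : S) * (((m : T) : S) * s₀)) * v₁ * v₂ * v₀ := by
          rw [map_mul, map_mul]; ring
  rw [key]
  exact mul_mem (mul_mem (mul_mem h8 hv₁) hv₂) hv₀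


open Polynomial in
theorem bwd_aux {R S Rm Sm : Type*} [CommRing R] [CommRing S] [CommRing Rm] [CommRing Sm]
    [Algebra R S] (M : Submonoid R)
    [Algebra R Rm] [IsLocalization M Rm]
    [Algebra S Sm] [Algebra R Sm] [Algebra Rm Sm]
    [IsScalarTower R S Sm] [IsScalarTower R Rm Sm]
    [IsLocalization (M.map (algebraMap R S)) Sm]
    (hQP : IsQuasiPruferExtension Rm Sm)
    (T : Subalgebra R S) (hT : integralClosure R S ≤ T) (x : S) (hx : IsIntegral T x) :
    ∃ r ∈ M, algebraMap R S r * x ∈ T := by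
  have hcomp : ∀ r : R, algebraMap Rm Sm (algebraMap R Rm r)
      = algebraMap S Sm (algebraMap R S r) := fun r => by
    rw [← IsScalarTower.algebraMap_apply, IsScalarTower.algebraMap_apply R S Sm]
  let T' : Subalgebra Rm Sm :=
    { carrier := {y | ∃ t ∈ T, ∃ r ∈ M,
        y * algebraMap S Sm (algebraMap R S r) = algebraMap S Sm t}
      one_mem' := ⟨1, one_mem T, 1, one_mem M, by simp⟩
      zero_mem' := ⟨0, zero_mem T, 1, one_mem M, by simp⟩
      mul_mem' := by
        rintro a b ⟨t1, ht1, r1, hr1, e1⟩ ⟨t2, ht2, r2, hr2, e2⟩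
        refine ⟨t1 * t2, mul_mem ht1 ht2, r1 * r2, mul_mem hr1 hr2, ?_⟩
        rw [map_mul, map_mul, map_mul]
        linear_combination (b * algebraMap S Sm (algebraMap R S r2)) * e1
          + algebraMap S Sm t1 * e2
      add_mem' := by
        rintro a b ⟨t1, ht1, r1, hr1, e1⟩ ⟨t2, ht2, r2, hr2, e2⟩
        refine ⟨t1 * algebraMap R S r2 + t2 * algebraMap R S r1,
          add_mem (mul_mem ht1 (T.algebraMap_mem r2)) (mul_mem ht2 (T.algebraMap_mem r1)),
          r1 * r2, mul_mem hr1 hr2, ?_⟩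
        rw [map_mul, map_mul, map_add, map_mul, map_mul]
        linear_combination algebraMap S Sm (algebraMap R S r2) * e1
          + algebraMap S Sm (algebraMap R S r1) * e2
      algebraMap_mem' := by
        intro ρ
        obtain ⟨⟨a, r⟩, rfl⟩ := IsLocalization.mk'_surjective M ρ
        refine ⟨algebraMap R S a, T.algebraMap_mem a, r, r.2, ?_⟩
        rw [← hcomp, ← hcomp, ← map_mul, IsLocalization.mk'_spec] }
  have hT'int : integralClosure Rm Sm ≤ T' := by
    intro y hy
    obtain ⟨m, hmy⟩ :=
      (hy : IsIntegral Rm y).exists_multiple_integral_of_isLocalization (M := M)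
    rw [Submonoid.smul_def, Algebra.smul_def, IsScalarTower.algebraMap_apply R S Sm] at hmy
    obtain ⟨⟨s₀, n₀⟩, hs⟩ := IsLocalization.surj (M.map (algebraMap R S))
      (algebraMap S Sm (algebraMap R S (m : R)) * y)
    obtain ⟨r₀, hr₀M, hfr₀⟩ := n₀.2
    have h2 : IsIntegral R (algebraMap S Sm s₀) := by
      rw [← hs]
      have h1 : IsIntegral R (algebraMap S Sm (n₀ : S)) := by
        rw [← hfr₀, ← IsScalarTower.algebraMap_apply R S Sm]; exact isIntegral_algebraMap
      exact hmy.mul h1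
    have hNa : ∀ n : (M.map (algebraMap R S)), ∃ a : R, algebraMap R S a = (n : S) := by
      rintro ⟨n, hn⟩; obtain ⟨r, hr, rfl⟩ := hn; exact ⟨r, rfl⟩
    obtain ⟨n₁, h3⟩ := descend_integral_aux (A := R) (M.map (algebraMap R S)) hNa h2
    obtain ⟨r₁, hr₁M, hfr₁⟩ := n₁.2
    have h4 : (n₁ : S) * s₀ ∈ T := hT h3
    refine ⟨(n₁ : S) * s₀, h4, (m : R) * r₀ * r₁, mul_mem (mul_mem m.2 hr₀M) hr₁M, ?_⟩
    rw [map_mul, map_mul, map_mul, map_mul, map_mul, hfr₀, hfr₁]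
    linear_combination algebraMap S Sm (n₁ : S) * hs
  have hmemT' : ∀ t : S, t ∈ T → algebraMap S Sm t ∈ T' := fun t ht =>
    ⟨t, ht, 1, one_mem M, by simp⟩
  let χ : T →+* T' :=
    ((algebraMap S Sm).comp (Subalgebra.val T : T →ₐ[R] S).toRingHom).codRestrict
      T'.toSubring (fun t => hmemT' (t : S) t.2)
  have hxint : IsIntegral T' (algebraMap S Sm x) := by
    obtain ⟨p, hp, hpe⟩ := hx
    refine ⟨p.map χ, hp.map χ, ?_⟩
    rw [eval₂_map]
    have h5 : (algebraMap T' Sm).comp χ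
        = (algebraMap S Sm).comp (algebraMap T S) := rfl
    rw [h5, ← hom_eval₂, hpe, map_zero]
  have hgx : algebraMap S Sm x ∈ T' := hQP T' hT'int _ hxint
  obtain ⟨t, ht, r, hrM, he⟩ := hgx
  have h6 : algebraMap S Sm (algebraMap R S r * x - t) = 0 := by
    rw [map_sub, map_mul]; linear_combination he
  obtain ⟨n, hn⟩ := (IsLocalization.map_eq_zero_iff (M.map (algebraMap R S)) Sm _).mp h6
  obtain ⟨r', hr'M, hfr'⟩ := n.2
  rw [← hfr'] at hn
  refine ⟨r' * r, mul_mem hr'M hrM, ?_⟩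
  have h7 : algebraMap R S (r' * r) * x = algebraMap R S r' * t := by
    rw [map_mul]; linear_combination hn
  rw [h7]
  exact mul_mem (T.algebraMap_mem r') ht


/-- **Proposition 3.1 (quasi-Prüfer case).** `R ⊆ S` is quasi-Prüfer iff for every prime `P`
of `R`, the extension `R_P ⊆ S_P` is quasi-Prüfer, where `S_P` is the localization of `S`
at the multiplicative set `R ∖ P`. -/
theorem isQuasiPruferExtension_iff_localizations {R S : Type*} [CommRing R] [CommRing S]
    [Algebra R S] (hinj : Function.Injective (algebraMap R S)) :
    IsQuasiPruferExtension R S ↔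
      ∀ (P : Ideal R) [P.IsPrime],
        letI : Algebra (Localization.AtPrime P)
            (Localization (P.primeCompl.map (algebraMap R S))) :=
          (IsLocalization.map (Localization (P.primeCompl.map (algebraMap R S)))
            (algebraMap R S) P.primeCompl.le_comap_map :
              Localization.AtPrime P →+* _).toAlgebra
        IsQuasiPruferExtension (Localization.AtPrime P)
          (Localization (P.primeCompl.map (algebraMap R S))) := by
  constructor
  · intro H P hP
    letI : Algebra (Localization.AtPrime P)
        (Localization (P.primeCompl.map (algebraMap R S))) :=
      (IsLocalization.map (Localization (P.primeCompl.map (algebraMap R S)))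
        (algebraMap R S) P.primeCompl.le_comap_map :
          Localization.AtPrime P →+* _).toAlgebra
    haveI h1 : IsScalarTower R S (Localization (P.primeCompl.map (algebraMap R S))) :=
      IsScalarTower.of_algebraMap_eq' rfl
    haveI h2 : IsScalarTower R (Localization.AtPrime P)
        (Localization (P.primeCompl.map (algebraMap R S))) :=
      IsScalarTower.of_algebraMap_eq fun r => by
        rw [IsScalarTower.algebraMap_apply R S]
        exact (IsLocalization.map_eq P.primeCompl.le_comap_map r).symm
    exact fwd_aux P.primeCompl H
  · intro hloc T hT x hx
    by_contra hxT
    let J : Ideal R :=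
      { carrier := {r | algebraMap R S r * x ∈ T}
        add_mem' := by
          intro a b ha hb
          simp only [Set.mem_setOf_eq, map_add, add_mul] at *
          exact add_mem ha hb
        zero_mem' := by
          show algebraMap R S 0 * x ∈ T
          rw [map_zero, zero_mul]; exact zero_mem T
        smul_mem' := by
          intro c r hr
          simp only [Set.mem_setOf_eq, smul_eq_mul, map_mul, mul_assoc] at *
          exact mul_mem (T.algebraMap_mem c) hr }
    have hJ : J ≠ ⊤ := by
      intro h
      have h1 : (1 : R) ∈ J := h ▸ Submodule.mem_top
      have h2 : algebraMap R S (1 : R) * x ∈ T := h1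
      rw [map_one, one_mul] at h2
      exact hxT h2
    obtain ⟨P, hPmax, hJP⟩ := Ideal.exists_le_maximal J hJ
    haveI := hPmax.isPrime
    letI : Algebra (Localization.AtPrime P)
        (Localization (P.primeCompl.map (algebraMap R S))) :=
      (IsLocalization.map (Localization (P.primeCompl.map (algebraMap R S)))
        (algebraMap R S) P.primeCompl.le_comap_map :
          Localization.AtPrime P →+* _).toAlgebra
    haveI h1 : IsScalarTower R S (Localization (P.primeCompl.map (algebraMap R S))) :=
      IsScalarTower.of_algebraMap_eq' rfl
    haveI h2 : IsScalarTower R (Localization.AtPrime P)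
        (Localization (P.primeCompl.map (algebraMap R S))) :=
      IsScalarTower.of_algebraMap_eq fun r => by
        rw [IsScalarTower.algebraMap_apply R S]
        exact (IsLocalization.map_eq P.primeCompl.le_comap_map r).symm
    have hQP : IsQuasiPruferExtension (Localization.AtPrime P)
        (Localization (P.primeCompl.map (algebraMap R S))) := hloc P
    obtain ⟨r, hr, hrx⟩ := bwd_aux P.primeCompl hQP T hT x hx
    exact hr (hJP hrx)
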